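/- Let A and B be lattices. Then: (i) BoxCl(a ⊠ b) = a ⊠ b, for all a ∈ A and b ∈ B; (ii) if H ⊆ A × B is confined, then BoxCl(H) is confined; (iii) K ∈ A ⊠ B if and only if K = BoxCl(H) for some confined H ∈ A ⊡ B; (iv) if A and B have least elements and a_0 ≤ a_1 in A, b_0 ≤ b_1 in B, then BoxCl((a_0 ⊠ b_1) ∪ (a_1 ⊠ b_0)) = (a_0 ⊠ b_1) ∪ (a_1 ⊠ b_0), so (a_0 ⊠ b_1) ∪ (a_1 ⊠ b_0) ∈ A ⊠ B. -/
import Mathlib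


/-- The pure box `a □ b = {⟨x,y⟩ : x ≤ a or y ≤ b}`. -/
def pureBox {A B : Type*} [Lattice A] [Lattice B] (a : A) (b : B) : Set (A × B) :=
  {p : A × B | p.1 ≤ a ∨ p.2 ≤ b}

/-- `a ∘ b = {⟨x,y⟩ : x ≤ a and y ≤ b}`. -/
def pureCirc {A B : Type*} [Lattice A] [Lattice B] (a : A) (b : B) : Set (A × B) :=
  {p : A × B | p.1 ≤ a ∧ p.2 ≤ b}

/-- The box product `A □ B`: all finite (nonempty) intersections of pure boxes. -/
def BoxProd (A B : Type*) [Lattice A] [Lattice B] : Set (Set (A × B)) :=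
  {H | ∃ (n : ℕ) (a : Fin (n + 1) → A) (b : Fin (n + 1) → B),
    H = ⋂ i, pureBox (a i) (b i)}

/-- `A ⊡ B`: all finite unions of pure boxes (at least one) and pure circles. -/
def BoxDot (A B : Type*) [Lattice A] [Lattice B] : Set (Set (A × B)) :=
  {H | ∃ (m n : ℕ) (a : Fin (m + 1) → A) (b : Fin (m + 1) → B)
      (c : Fin n → A) (d : Fin n → B),
    H = (⋃ i, pureBox (a i) (b i)) ∪ ⋃ j, pureCirc (c j) (d j)}

/-- The box closure of a subset of `A × B`: intersection of all pure boxes containing it. -/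
def BoxCl {A B : Type*} [Lattice A] [Lattice B] (X : Set (A × B)) : Set (A × B) :=
  ⋂ (a : A) (b : B) (_ : X ⊆ pureBox a b), pureBox a b

/-- The pure lattice tensor `a ⊠ b = (a ∘ b) ∪ ⊥_{A,B}`, where `⊥_{A,B}` consists of
the pairs one of whose coordinates is a least element. -/
def pureTens {A B : Type*} [Lattice A] [Lattice B] (a : A) (b : B) : Set (A × B) :=
  pureCirc a b ∪ {p : A × B | IsBot p.1 ∨ IsBot p.2}

/-- A subset of `A × B` is confined if it is contained in some pure lattice tensor. -/
def Confined {A B : Type*} [Lattice A] [Lattice B] (X : Set (A × B)) : Prop :=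
  ∃ (a : A) (b : B), X ⊆ pureTens a b

/-- The lattice tensor product `A ⊠ B`: all confined elements of `A □ B`. -/
def LatTens (A B : Type*) [Lattice A] [Lattice B] : Set (Set (A × B)) :=
  {H | H ∈ BoxProd A B ∧ Confined H}

/-- `X^△ = {⟨a,b⟩ : ⟨x,y⟩ ◁ ⟨a,b⟩ for all ⟨x,y⟩ ∈ X}` where `⟨x,y⟩ ◁ ⟨a,b⟩` iff
`x ≤ a` or `y ≤ b`. -/
def trUp {A B : Type*} [Lattice A] [Lattice B] (X : Set (A × B)) : Set (A × B) :=
  {p : A × B | ∀ q ∈ X, q.1 ≤ p.1 ∨ q.2 ≤ p.2}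

/-- `X^▽ = {⟨a,b⟩ : ⟨a,b⟩ ◁ ⟨x,y⟩ for all ⟨x,y⟩ ∈ X}`. -/
def trDown {A B : Type*} [Lattice A] [Lattice B] (X : Set (A × B)) : Set (A × B) :=
  {p : A × B | ∀ q ∈ X, p.1 ≤ q.1 ∨ p.2 ≤ q.2}

section helpers
variable {A B : Type*} [Lattice A] [Lattice B]

lemma mem_boxCl {X : Set (A × B)} {p : A × B} :
    p ∈ BoxCl X ↔ ∀ u : A, ∀ v : B, X ⊆ pureBox u v → p ∈ pureBox u v := by
  simp [BoxCl, Set.mem_iInter]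

lemma subset_boxCl (X : Set (A × B)) : X ⊆ BoxCl X := fun p hp =>
  mem_boxCl.2 fun u v hX => hX hp

lemma boxCl_mono {X Y : Set (A × B)} (h : X ⊆ Y) : BoxCl X ⊆ BoxCl Y := fun p hp =>
  mem_boxCl.2 fun u v hY => mem_boxCl.1 hp u v (h.trans hY)

lemma pureBox_mono {a u : A} {b v : B} (h1 : a ≤ u) (h2 : b ≤ v) :
    pureBox a b ⊆ pureBox u v := fun p hp =>
  hp.imp (fun h => h.trans h1) (fun h => h.trans h2)

lemma pureTens_subset_pureBox₁ (a : A) (b : B) (v : B) : pureTens a b ⊆ pureBox a v := by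
  rintro p (⟨h1, _⟩ | h | h)
  · exact Or.inl h1
  · exact Or.inl (h a)
  · exact Or.inr (h v)

lemma pureTens_subset_pureBox₂ (a : A) (b : B) (u : A) : pureTens a b ⊆ pureBox u b := by
  rintro p (⟨_, h2⟩ | h | h)
  · exact Or.inr h2
  · exact Or.inl (h u)
  · exact Or.inr (h b)

lemma boxCl_pureTens (a : A) (b : B) : BoxCl (pureTens a b) = pureTens a b := by
  refine le_antisymm ?_ (subset_boxCl _)
  intro p hp
  by_contra hpn
  have hn : ¬(p.1 ≤ a ∧ p.2 ≤ b) ∧ ¬ IsBot p.1 ∧ ¬ IsBot p.2 := by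
    simp only [pureTens, pureCirc, Set.mem_union, Set.mem_setOf_eq, not_or] at hpn
    exact ⟨hpn.1, hpn.2⟩
  obtain ⟨hnc, hn1, hn2⟩ := hn
  obtain ⟨z1, hz1⟩ : ∃ z, ¬ p.1 ≤ z := by simpa [IsBot] using hn1
  obtain ⟨z2, hz2⟩ : ∃ z, ¬ p.2 ≤ z := by simpa [IsBot] using hn2
  by_cases ha : p.1 ≤ a
  · have hb : ¬ p.2 ≤ b := fun hb => hnc ⟨ha, hb⟩
    have := mem_boxCl.1 hp z1 b (pureTens_subset_pureBox₂ a b z1)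
    exact this.elim hz1 hb
  · have := mem_boxCl.1 hp a z2 (pureTens_subset_pureBox₁ a b z2)
    exact this.elim ha hz2

end helpers

section main
variable {A B : Type*} [Lattice A] [Lattice B]

open Classical in
lemma boxCl_boxDot_mem {H : Set (A × B)} (hH : H ∈ BoxDot A B) : BoxCl H ∈ BoxProd A B := by
  obtain ⟨m, n, a, b, c, d, rfl⟩ := hH
  set H : Set (A × B) := (⋃ i, pureBox (a i) (b i)) ∪ ⋃ j, pureCirc (c j) (d j) with hHdef
  have ne1 : (Finset.univ : Finset (Fin (m+1) ⊕ Fin n)).Nonempty :=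
    ⟨Sum.inl 0, Finset.mem_univ _⟩
  set u : (Fin n → Bool) → A := fun σ =>
    Finset.univ.sup' ne1 (Sum.elim a (fun j => if σ j then c j else a 0)) with hu
  set v : (Fin n → Bool) → B := fun σ =>
    Finset.univ.sup' ne1 (Sum.elim b (fun j => if σ j then b 0 else d j)) with hv
  have hau : ∀ σ i, a i ≤ u σ := fun σ i =>
    Finset.le_sup' (Sum.elim a (fun j => if σ j then c j else a 0)) (Finset.mem_univ (Sum.inl i))
  have hbv : ∀ σ i, b i ≤ v σ := fun σ i =>
    Finset.le_sup' (Sum.elim b (fun j => if σ j then b 0 else d j)) (Finset.mem_univ (Sum.inl i))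
  have hcu : ∀ σ j, σ j = true → c j ≤ u σ := fun σ j hj => by
    have := Finset.le_sup' (Sum.elim a (fun j => if σ j then c j else a 0))
      (Finset.mem_univ (Sum.inr j))
    simpa [hj] using this
  have hdv : ∀ σ j, σ j = false → d j ≤ v σ := fun σ j hj => by
    have := Finset.le_sup' (Sum.elim b (fun j => if σ j then b 0 else d j))
      (Finset.mem_univ (Sum.inr j))
    simpa [hj] using this
  -- each box (u σ, v σ) contains H
  have hbig : ∀ σ, H ⊆ pureBox (u σ) (v σ) := by
    intro σ p hp
    rcases hp with hp | hp
    · obtain ⟨i, hi⟩ := Set.mem_iUnion.1 hp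
      exact pureBox_mono (hau σ i) (hbv σ i) hi
    · obtain ⟨j, hj⟩ := Set.mem_iUnion.1 hp
      rcases Bool.eq_false_or_eq_true (σ j) with h | h
      · exact Or.inl (hj.1.trans (hcu σ j h))
      · exact Or.inr (hj.2.trans (hdv σ j h))
  have key : BoxCl H = ⋂ σ : Fin n → Bool, pureBox (u σ) (v σ) := by
    apply le_antisymm
    · intro p hp
      exact Set.mem_iInter.2 fun σ => mem_boxCl.1 hp (u σ) (v σ) (hbig σ)
    · intro p hp
      refine mem_boxCl.2 fun w z hwz => ?_
      by_cases hw : ∀ x : A, x ≤ w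
      · exact Or.inl (hw p.1)
      by_cases hz : ∀ y : B, y ≤ z
      · exact Or.inr (hz p.2)
      push_neg at hw hz
      obtain ⟨x₀, hx₀⟩ := hw
      obtain ⟨y₀, hy₀⟩ := hz
      have haw : ∀ i, a i ≤ w := by
        intro i
        have : (⟨a i, y₀⟩ : A × B) ∈ H := Or.inl (Set.mem_iUnion.2 ⟨i, Or.inl le_rfl⟩)
        exact (hwz this).resolve_right hy₀
      have hbz : ∀ i, b i ≤ z := by
        intro i
        have : (⟨x₀, b i⟩ : A × B) ∈ H := Or.inl (Set.mem_iUnion.2 ⟨i, Or.inr le_rfl⟩)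
        exact (hwz this).resolve_left hx₀
      have hcd : ∀ j, c j ≤ w ∨ d j ≤ z := by
        intro j
        have : (⟨c j, d j⟩ : A × B) ∈ H :=
          Or.inr (Set.mem_iUnion.2 ⟨j, ⟨le_rfl, le_rfl⟩⟩)
        exact hwz this
      set σ : Fin n → Bool := fun j => decide (c j ≤ w) with hσ
      have huw : u σ ≤ w := by
        apply Finset.sup'_le
        rintro (i | j) _
        · exact haw i
        · simp only [Sum.elim_inr]
          by_cases h : c j ≤ w
          · simpa [hσ, h] using h
          · simpa [hσ, h] using haw 0
      have hvz : v σ ≤ z := by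
        apply Finset.sup'_le
        rintro (i | j) _
        · exact hbz i
        · simp only [Sum.elim_inr]
          by_cases h : c j ≤ w
          · simpa [hσ, h] using hbz 0
          · simpa [hσ, h] using (hcd j).resolve_left h
      exact pureBox_mono huw hvz (Set.mem_iInter.1 hp σ)
  -- reindex to Fin (2^n)
  have hcard : Fintype.card (Fin n → Bool) = 2 ^ n - 1 + 1 := by
    simp [Nat.sub_add_cancel (Nat.one_le_two_pow)]
  let e : (Fin n → Bool) ≃ Fin (2 ^ n - 1 + 1) := Fintype.equivFinOfCardEq hcard
  refine ⟨2 ^ n - 1, fun i => u (e.symm i), fun i => v (e.symm i), ?_⟩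
  rw [key]
  ext p
  simp only [Set.mem_iInter]
  exact ⟨fun h i => h (e.symm i), fun h σ => by simpa using h (e σ)⟩

end main

section decomp
variable {A B : Type*} [Lattice A] [Lattice B]

open Classical in
lemma boxProd_mem_boxDot {K : Set (A × B)} (hK : K ∈ BoxProd A B) : K ∈ BoxDot A B := by
  obtain ⟨n, a, b, rfl⟩ := hK
  set K : Set (A × B) := ⋂ i, pureBox (a i) (b i) with hKdef
  have neu : (Finset.univ : Finset (Fin (n+1))).Nonempty := ⟨0, Finset.mem_univ _⟩
  set α : A := Finset.univ.inf' neu a with hα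
  set β : B := Finset.univ.inf' neu b with hβ
  have hαa : ∀ i, α ≤ a i := fun i => Finset.inf'_le a (Finset.mem_univ i)
  have hβb : ∀ i, β ≤ b i := fun i => Finset.inf'_le b (Finset.mem_univ i)
  set c : (Fin (n+1) → Bool) → A := fun S =>
    if h : (Finset.univ.filter (fun i => S i = true)).Nonempty
    then (Finset.univ.filter (fun i => S i = true)).inf' h a else α with hc
  set d : (Fin (n+1) → Bool) → B := fun S =>
    if h : (Finset.univ.filter (fun i => S i = false)).Nonempty
    then (Finset.univ.filter (fun i => S i = false)).inf' h b else β with hd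
  have hbox : pureBox α β ⊆ K := by
    intro p hp
    refine Set.mem_iInter.2 fun i => hp.imp (fun h => h.trans (hαa i)) (fun h => h.trans (hβb i))
  have hcirc : ∀ S, pureCirc (c S) (d S) ⊆ K := by
    intro S p hp
    refine Set.mem_iInter.2 fun i => ?_
    rcases Bool.eq_false_or_eq_true (S i) with h | h
    · left
      have hne : (Finset.univ.filter (fun i => S i = true)).Nonempty :=
        ⟨i, Finset.mem_filter.2 ⟨Finset.mem_univ _, h⟩⟩
      have : c S ≤ a i := by
        rw [hc]
        simp only [hne, dif_pos]
        exact Finset.inf'_le a (Finset.mem_filter.2 ⟨Finset.mem_univ _, h⟩)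
      exact hp.1.trans this
    · right
      have hne : (Finset.univ.filter (fun i => S i = false)).Nonempty :=
        ⟨i, Finset.mem_filter.2 ⟨Finset.mem_univ _, h⟩⟩
      have : d S ≤ b i := by
        rw [hd]
        simp only [hne, dif_pos]
        exact Finset.inf'_le b (Finset.mem_filter.2 ⟨Finset.mem_univ _, h⟩)
      exact hp.2.trans this
  have keq : K = pureBox α β ∪ ⋃ S : Fin (n+1) → Bool, pureCirc (c S) (d S) := by
    apply Set.Subset.antisymm
    · intro p hp
      by_cases h1 : ∀ i, p.1 ≤ a i
      · exact Or.inl (Or.inl (Finset.le_inf' neu a fun i _ => h1 i))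
      by_cases h2 : ∀ i, p.2 ≤ b i
      · exact Or.inl (Or.inr (Finset.le_inf' neu b fun i _ => h2 i))
      push_neg at h1 h2
      obtain ⟨i₁, hi₁⟩ := h1
      obtain ⟨i₂, hi₂⟩ := h2
      set S : Fin (n+1) → Bool := fun i => decide (p.1 ≤ a i) with hS
      refine Or.inr (Set.mem_iUnion.2 ⟨S, ?_, ?_⟩)
      · have hne : (Finset.univ.filter (fun i => S i = true)).Nonempty := by
          refine ⟨i₂, Finset.mem_filter.2 ⟨Finset.mem_univ _, ?_⟩⟩
          have := (Set.mem_iInter.1 hp i₂).resolve_right hi₂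
          simp [hS, this]
        rw [hc]
        simp only [hne, dif_pos]
        refine Finset.le_inf' _ _ fun i hi => ?_
        have := (Finset.mem_filter.1 hi).2
        simpa [hS] using this
      · have hne : (Finset.univ.filter (fun i => S i = false)).Nonempty := by
          refine ⟨i₁, Finset.mem_filter.2 ⟨Finset.mem_univ _, ?_⟩⟩
          simp [hS, hi₁]
        rw [hd]
        simp only [hne, dif_pos]
        refine Finset.le_inf' _ _ fun i hi => ?_
        have hSi := (Finset.mem_filter.1 hi).2
        have : ¬ p.1 ≤ a i := by simpa [hS] using hSi
        exact (Set.mem_iInter.1 hp i).resolve_left this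
    · rintro p (hp | hp)
      · exact hbox hp
      · obtain ⟨S, hS⟩ := Set.mem_iUnion.1 hp
        exact hcirc S hS
  have hcard : Fintype.card (Fin (n+1) → Bool) = 2 ^ (n+1) := by simp
  let e : Fin (2 ^ (n+1)) ≃ (Fin (n+1) → Bool) := (Fintype.equivFinOfCardEq hcard).symm
  refine ⟨0, 2 ^ (n+1), fun _ => α, fun _ => β, fun j => c (e j), fun j => d (e j), ?_⟩
  rw [keq]
  congr 1
  · ext p; simp
  · ext p
    simp only [Set.mem_iUnion]
    exact ⟨fun ⟨S, h⟩ => ⟨e.symm S, by simpa using h⟩, fun ⟨j, h⟩ => ⟨e j, h⟩⟩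

end decomp

section assemble
variable {A B : Type*} [Lattice A] [Lattice B]

lemma confined_boxCl {H : Set (A × B)} (h : Confined H) : Confined (BoxCl H) := by
  obtain ⟨a, b, hsub⟩ := h
  exact ⟨a, b, (boxCl_mono hsub).trans (boxCl_pureTens a b).subset⟩

lemma boxCl_of_boxProd {K : Set (A × B)} (hK : K ∈ BoxProd A B) : BoxCl K = K := by
  obtain ⟨n, a, b, rfl⟩ := hK
  refine le_antisymm ?_ (subset_boxCl _)
  intro p hp
  refine Set.mem_iInter.2 fun i => ?_
  exact mem_boxCl.1 hp (a i) (b i) (Set.iInter_subset _ i)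

theorem stmt_7_aux :
    (∀ (a : A) (b : B), BoxCl (pureTens a b) = pureTens a b) ∧
    (∀ H : Set (A × B), Confined H → Confined (BoxCl H)) ∧
    (∀ K : Set (A × B), K ∈ LatTens A B ↔
      ∃ H ∈ BoxDot A B, Confined H ∧ K = BoxCl H) ∧
    (∀ (_ : ∃ x : A, IsBot x) (_ : ∃ y : B, IsBot y)
        (a₀ a₁ : A) (b₀ b₁ : B), a₀ ≤ a₁ → b₀ ≤ b₁ →
      BoxCl (pureTens a₀ b₁ ∪ pureTens a₁ b₀) = pureTens a₀ b₁ ∪ pureTens a₁ b₀ ∧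
      pureTens a₀ b₁ ∪ pureTens a₁ b₀ ∈ LatTens A B) := by
  have part3 : ∀ K : Set (A × B), K ∈ LatTens A B ↔
      ∃ H ∈ BoxDot A B, Confined H ∧ K = BoxCl H := by
    intro K
    constructor
    · rintro ⟨hprod, hconf⟩
      exact ⟨K, boxProd_mem_boxDot hprod, hconf, (boxCl_of_boxProd hprod).symm⟩
    · rintro ⟨H, hdot, hconf, rfl⟩
      exact ⟨boxCl_boxDot_mem hdot, confined_boxCl hconf⟩
  refine ⟨boxCl_pureTens, fun H => confined_boxCl, part3, ?_⟩
  rintro ⟨x₀, hx₀⟩ ⟨y₀, hy₀⟩ a₀ a₁ b₀ b₁ ha hb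
  set T : Set (A × B) := pureTens a₀ b₁ ∪ pureTens a₁ b₀ with hT
  have hcl : BoxCl T = T := by
    refine le_antisymm ?_ (subset_boxCl _)
    intro p hp
    by_contra hpn
    have hn : ¬(p.1 ≤ a₀ ∧ p.2 ≤ b₁) ∧ ¬(p.1 ≤ a₁ ∧ p.2 ≤ b₀) ∧
        ¬ IsBot p.1 ∧ ¬ IsBot p.2 := by
      simp only [hT, pureTens, pureCirc, Set.mem_union, Set.mem_setOf_eq, not_or] at hpn
      exact ⟨hpn.1.1, hpn.2.1, hpn.1.2⟩
    obtain ⟨h01, h10, hn1, hn2⟩ := hn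
    obtain ⟨z1, hz1⟩ : ∃ z, ¬ p.1 ≤ z := by simpa [IsBot] using hn1
    obtain ⟨z2, hz2⟩ : ∃ z, ¬ p.2 ≤ z := by simpa [IsBot] using hn2
    by_cases hp1 : p.1 ≤ a₁
    · by_cases hp2 : p.2 ≤ b₁
      · -- use box a₀ □ b₀
        have hsub : T ⊆ pureBox a₀ b₀ := by
          rintro q ((⟨hq, _⟩ | hq | hq) | (⟨_, hq⟩ | hq | hq))
          · exact Or.inl hq
          · exact Or.inl (hq a₀)
          · exact Or.inr (hq b₀)
          · exact Or.inr hq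
          · exact Or.inl (hq a₀)
          · exact Or.inr (hq b₀)
        have := mem_boxCl.1 hp a₀ b₀ hsub
        exact this.elim (fun h => h01 ⟨h, hp2⟩) (fun h => h10 ⟨hp1, h⟩)
      · -- use box z1 □ b₁
        have hsub : T ⊆ pureBox z1 b₁ := by
          rintro q ((⟨_, hq⟩ | hq | hq) | (⟨_, hq⟩ | hq | hq))
          · exact Or.inr hq
          · exact Or.inl (hq z1)
          · exact Or.inr (hq b₁)
          · exact Or.inr (hq.trans hb)
          · exact Or.inl (hq z1)
          · exact Or.inr (hq b₁)
        exact (mem_boxCl.1 hp z1 b₁ hsub).elim hz1 hp2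
    · -- use box a₁ □ z2
      have hsub : T ⊆ pureBox a₁ z2 := by
        rintro q ((⟨hq, _⟩ | hq | hq) | (⟨hq, _⟩ | hq | hq))
        · exact Or.inl (hq.trans ha)
        · exact Or.inl (hq a₁)
        · exact Or.inr (hq z2)
        · exact Or.inl hq
        · exact Or.inl (hq a₁)
        · exact Or.inr (hq z2)
      exact (mem_boxCl.1 hp a₁ z2 hsub).elim hp1 hz2
  refine ⟨hcl, ?_⟩
  have hdot : T ∈ BoxDot A B := by
    refine ⟨0, 2, fun _ => x₀, fun _ => y₀, ![a₀, a₁], ![b₁, b₀], ?_⟩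
    ext p
    simp only [hT, pureTens, pureCirc, Set.mem_union, Set.mem_setOf_eq, Set.mem_iUnion,
      pureBox, Fin.exists_fin_two, Matrix.cons_val_zero, Matrix.cons_val_one, Matrix.head_cons]
    constructor
    · rintro ((h | h | h) | (h | h | h))
      · exact Or.inr (Or.inl h)
      · exact Or.inl ⟨0, Or.inl (h x₀)⟩
      · exact Or.inl ⟨0, Or.inr (h y₀)⟩
      · exact Or.inr (Or.inr h)
      · exact Or.inl ⟨0, Or.inl (h x₀)⟩
      · exact Or.inl ⟨0, Or.inr (h y₀)⟩
    · rintro (⟨_, (h | h)⟩ | h | h)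
      · exact Or.inl (Or.inr (Or.inl fun z => h.trans (hx₀ z)))
      · exact Or.inl (Or.inr (Or.inr fun z => h.trans (hy₀ z)))
      · exact Or.inl (Or.inl h)
      · exact Or.inr (Or.inl h)
  have hconf : Confined T := by
    refine ⟨a₁, b₁, ?_⟩
    rintro q ((⟨h1, h2⟩ | hq | hq) | (⟨h1, h2⟩ | hq | hq))
    · exact Or.inl ⟨h1.trans ha, h2⟩
    · exact Or.inr (Or.inl hq)
    · exact Or.inr (Or.inr hq)
    · exact Or.inl ⟨h1, h2.trans hb⟩
    · exact Or.inr (Or.inl hq)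
    · exact Or.inr (Or.inr hq)
  have := (part3 T).2 ⟨T, hdot, hconf, hcl.symm⟩
  exact this

end assemble

/-- Basic properties of box closures in relation with the lattice tensor product. -/
theorem stmt_7 {A B : Type*} [Lattice A] [Lattice B] :
    (∀ (a : A) (b : B), BoxCl (pureTens a b) = pureTens a b) ∧
    (∀ H : Set (A × B), Confined H → Confined (BoxCl H)) ∧
    (∀ K : Set (A × B), K ∈ LatTens A B ↔
      ∃ H ∈ BoxDot A B, Confined H ∧ K = BoxCl H) ∧
    (∀ (_ : ∃ x : A, IsBot x) (_ : ∃ y : B, IsBot y)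
        (a₀ a₁ : A) (b₀ b₁ : B), a₀ ≤ a₁ → b₀ ≤ b₁ →
      BoxCl (pureTens a₀ b₁ ∪ pureTens a₁ b₀) = pureTens a₀ b₁ ∪ pureTens a₁ b₀ ∧
      pureTens a₀ b₁ ∪ pureTens a₁ b₀ ∈ LatTens A B) :=
  stmt_7_aux
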